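/- For the star graph S_n (n ≥ 2), the randomization overlap L(ρ^p_{S_n}) = Tr[|S_n⟩⟨S_n| ρ^p_{S_n}] equals 1/4 + (3/4) p^{n-1}. -/

import Mathlib

open scoped BigOperators

/-- The graph state amplitude function for edge set `E` on `n` qubits:
`|G⟩ = ∏ CZ |+⟩^⊗n`, whose amplitude on a computational basis state `x` is
`2^(-n/2)` times `(-1)` for every edge both of whose endpoints are in state `1`. -/
noncomputable def gs (n : ℕ) (E : Finset (Sym2 (Fin n))) : (Fin n → Fin 2) → ℂ :=
  fun x => ((Real.sqrt 2)⁻¹ : ℝ) ^ n *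
    ∏ e ∈ E, (if ∀ i ∈ e, x i = 1 then (-1 : ℂ) else 1)

/-- Inner product `⟨v|w⟩` on the `n`-qubit state space. -/
noncomputable def ip {n : ℕ} (v w : (Fin n → Fin 2) → ℂ) : ℂ :=
  ∑ x, (starRingEnd ℂ) (v x) * w x

/-- The edge set of the complete graph on `n` labeled vertices. -/
def completeEdges (n : ℕ) : Finset (Sym2 (Fin n)) :=
  Finset.univ.filter fun e => ¬ e.IsDiag

/-- The edge set of the star graph on `n+2` vertices with center `0`. -/
def starEdges (n : ℕ) : Finset (Sym2 (Fin (n + 2))) :=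
  (Finset.univ.filter fun j : Fin (n + 2) => j ≠ 0).image fun j => s(0, j)

lemma mem_starEdges {n : ℕ} {e : Sym2 (Fin (n+2))} (he : e ∈ starEdges n) :
    ∃ j : Fin (n+2), j ≠ 0 ∧ e = s(0, j) := by
  simp only [starEdges, Finset.mem_image, Finset.mem_filter] at he
  obtain ⟨j, ⟨_, hj⟩, rfl⟩ := he
  exact ⟨j, hj, rfl⟩

lemma starEdges_card (n : ℕ) : (starEdges n).card = n + 1 := by
  rw [starEdges, Finset.card_image_of_injOn, Finset.filter_ne',
    Finset.card_erase_of_mem (Finset.mem_univ _), Finset.card_univ]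
  · simp
  · intro j hj j' hj' h
    rw [Finset.mem_coe, Finset.mem_filter] at hj hj'
    rw [Sym2.eq_iff] at h
    rcases h with ⟨-, h⟩ | ⟨-, h⟩
    · exact h
    · exact absurd h hj.2

lemma sum_signs (n : ℕ) (S : Finset (Sym2 (Fin (n+2)))) (hS : S ⊆ starEdges n)
    (hne : S.Nonempty) :
    ∑ x : Fin (n+2) → Fin 2, ∏ e ∈ S, (if ∀ i ∈ e, x i = 1 then (-1:ℂ) else 1)
      = 2^(n+1) := by
  classical
  obtain ⟨e0, he0⟩ := hne
  obtain ⟨j0, hj0, rfl⟩ := mem_starEdges (hS he0)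
  rw [← Finset.sum_filter_add_sum_filter_not Finset.univ (fun x => x 0 = 0)]
  have h1 : ∑ x ∈ Finset.univ.filter (fun x : Fin (n+2) → Fin 2 => x 0 = 0),
      ∏ e ∈ S, (if ∀ i ∈ e, x i = 1 then (-1:ℂ) else 1) = 2^(n+1) := by
    have hterm : ∀ x ∈ Finset.univ.filter (fun x : Fin (n+2) → Fin 2 => x 0 = 0),
        (∏ e ∈ S, (if ∀ i ∈ e, x i = 1 then (-1:ℂ) else 1)) = 1 := by
      intro x hx
      refine Finset.prod_eq_one (fun e heS => ?_)
      obtain ⟨j, hj, rfl⟩ := mem_starEdges (hS heS)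
      rw [Finset.mem_filter] at hx
      rw [if_neg]
      simp only [Sym2.mem_iff]
      intro h
      have := h 0 (Or.inl rfl)
      rw [hx.2] at this
      exact absurd this (by decide)
    rw [Finset.sum_congr rfl hterm, Finset.sum_const, nsmul_eq_mul, mul_one]
    rw [Finset.card_nbij' (fun x => x ∘ Fin.succ) (fun y => Fin.cons 0 y)
        (fun a _ => Finset.mem_univ _) (fun y _ => ?_) (fun x hx => ?_) (fun y _ => ?_)]
    · simp
    · simp [Fin.cons_zero]
    · rw [Finset.mem_coe, Finset.mem_filter] at hx
      funext i
      cases i using Fin.cases with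
      | zero => simp [hx.2]
      | succ k => simp
    · funext k; simp
  have h2 : ∑ x ∈ Finset.univ.filter (fun x : Fin (n+2) → Fin 2 => ¬ x 0 = 0),
      ∏ e ∈ S, (if ∀ i ∈ e, x i = 1 then (-1:ℂ) else 1) = 0 := by
    refine Finset.sum_involution
      (fun x _ => Function.update x j0 (1 - x j0)) (fun x hx => ?_) (fun x hx _ => ?_)
      (fun x hx => ?_) (fun x hx => ?_)
    · -- f x + f (g x) = 0
      rw [Finset.mem_filter] at hx
      have hx1 : x 0 = 1 := by omega
      rw [← Finset.mul_prod_erase _ _ he0, ← Finset.mul_prod_erase _ _ he0]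
      have hrest : ∏ e ∈ S.erase s(0,j0),
            (if ∀ i ∈ e, Function.update x j0 (1 - x j0) i = 1 then (-1:ℂ) else 1)
          = ∏ e ∈ S.erase s(0,j0), (if ∀ i ∈ e, x i = 1 then (-1:ℂ) else 1) := by
        refine Finset.prod_congr rfl (fun e he => ?_)
        obtain ⟨j, hj, rfl⟩ := mem_starEdges (hS (Finset.mem_of_mem_erase he))
        have hne : j ≠ j0 := by
          intro h; subst h; exact (Finset.ne_of_mem_erase he) rfl
        simp only [Sym2.mem_iff, forall_eq_or_imp, forall_eq]
        rw [Function.update_of_ne (Ne.symm hj0), Function.update_of_ne hne]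
      rw [hrest]
      have hu0 : Function.update x j0 (1 - x j0) 0 = 1 := by
        rw [Function.update_of_ne (Ne.symm hj0)]; exact hx1
      simp only [Sym2.mem_iff, forall_eq_or_imp, forall_eq, hu0, hx1,
        Function.update_self, true_and]
      have : x j0 = 0 ∨ x j0 = 1 := by omega
      rcases this with h | h <;> simp [h]
    · -- g x ≠ x
      intro h
      have := congrFun h j0
      rw [Function.update_self] at this
      omega
    · -- membership
      rw [Finset.mem_filter] at hx ⊢
      refine ⟨Finset.mem_univ _, ?_⟩
      rw [Function.update_of_ne (Ne.symm hj0)]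
      exact hx.2
    · funext i
      by_cases h : i = j0
      · subst h; simp
      · simp [Function.update_of_ne h]
  rw [h1, h2, add_zero]

lemma ip_eq (n : ℕ) (F : Finset (Sym2 (Fin (n+2)))) (hF : F ⊆ starEdges n) :
    ip (gs (n+2) (starEdges n)) (gs (n+2) F)
      = ((2:ℂ)^(n+2))⁻¹ * ∑ x : Fin (n+2) → Fin 2,
          ∏ e ∈ (starEdges n) \ F, (if ∀ i ∈ e, x i = 1 then (-1:ℂ) else 1) := by
  rw [ip, Finset.mul_sum]
  refine Finset.sum_congr rfl (fun x _ => ?_)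
  have hconj : (starRingEnd ℂ) (gs (n+2) (starEdges n) x) = gs (n+2) (starEdges n) x := by
    simp [gs, map_prod, apply_ite]
  rw [hconj, gs, gs]
  set c : ℂ := (((Real.sqrt 2)⁻¹ : ℝ) : ℂ) with hc
  set A : ℂ := ∏ e ∈ (starEdges n) \ F, (if ∀ i ∈ e, x i = 1 then (-1:ℂ) else 1) with hA
  set B : ℂ := ∏ e ∈ F, (if ∀ i ∈ e, x i = 1 then (-1:ℂ) else 1) with hB
  have hE : (∏ e ∈ starEdges n, (if ∀ i ∈ e, x i = 1 then (-1:ℂ) else 1)) = A * B :=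
    (Finset.prod_sdiff hF).symm
  have hBB : B * B = 1 := by
    rw [hB, ← Finset.prod_mul_distrib]
    exact Finset.prod_eq_one fun e _ => by split_ifs <;> norm_num
  have hcc : c ^ (n+2) * c ^ (n+2) = ((2:ℂ)^(n+2))⁻¹ := by
    rw [hc, ← mul_pow, ← Complex.ofReal_mul, ← mul_inv,
      Real.mul_self_sqrt (by norm_num : (0:ℝ) ≤ 2)]
    push_cast
    rw [inv_pow]
  rw [hE]
  calc (c ^ (n+2) * (A * B)) * (c ^ (n+2) * B)
      = (c ^ (n+2) * c ^ (n+2)) * (A * (B * B)) := by ring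
    _ = ((2:ℂ)^(n+2))⁻¹ * A := by rw [hBB, hcc, mul_one]

lemma ip_cases (n : ℕ) (F : Finset (Sym2 (Fin (n+2)))) (hF : F ⊆ starEdges n) :
    ip (gs (n+2) (starEdges n)) (gs (n+2) F)
      = if F = starEdges n then 1 else 1/2 := by
  rw [ip_eq n F hF]
  split_ifs with h
  · subst h
    simp only [Finset.sdiff_self, Finset.prod_empty, Finset.sum_const, Finset.card_univ,
      nsmul_eq_mul, mul_one]
    have : (Fintype.card (Fin (n+2) → Fin 2) : ℂ) = 2^(n+2) := by simp
    rw [this, inv_mul_cancel₀ (pow_ne_zero _ two_ne_zero)]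
  · rw [sum_signs n _ Finset.sdiff_subset
      (Finset.sdiff_nonempty.mpr (fun hs => h (Finset.Subset.antisymm hF hs)))]
    rw [pow_succ, mul_inv]
    have h2 : ((2:ℂ)^(n+1))⁻¹ * (2:ℂ)^(n+1) = 1 := inv_mul_cancel₀ (pow_ne_zero _ two_ne_zero)
    calc ((2:ℂ)^(n+1))⁻¹ * (2:ℂ)⁻¹ * 2^(n+1)
        = (((2:ℂ)^(n+1))⁻¹ * (2:ℂ)^(n+1)) * 2⁻¹ := by ring
      _ = 1/2 := by rw [h2]; norm_num

lemma sum_weights (n : ℕ) (p : ℝ) :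
    ∑ F ∈ (starEdges n).powerset,
        p ^ F.card * (1 - p) ^ ((starEdges n).card - F.card) = 1 := by
  have h := Finset.prod_add (fun _ : Sym2 (Fin (n+2)) => p)
    (fun _ => 1 - p) (starEdges n)
  simp only [add_sub_cancel, Finset.prod_const, one_pow] at h
  rw [← Finset.sum_congr rfl (fun F hF => ?_), ← h]
  rw [Finset.card_sdiff_of_subset (Finset.mem_powerset.mp hF)]

/-- the randomization overlap of the randomized star graph state on
n+2 vertices is L(ρ^p_{S}) = 1/4 + (3/4) p^(n+1)  (i.e. 1/4 + (3/4) p^(N-1) on N ≥ 2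
vertices). -/
theorem star_randomization_overlap (n : ℕ) (p : ℝ) (hp0 : 0 ≤ p) (hp1 : p ≤ 1) :
    ∑ F ∈ (starEdges n).powerset,
        p ^ F.card * (1 - p) ^ ((starEdges n).card - F.card) *
          ‖ip (gs (n + 2) (starEdges n)) (gs (n + 2) F)‖ ^ 2
      = 1 / 4 + 3 / 4 * p ^ (n + 1) := by
  classical
  have hterm : ∀ F ∈ (starEdges n).powerset,
      p ^ F.card * (1 - p) ^ ((starEdges n).card - F.card) *
          ‖ip (gs (n + 2) (starEdges n)) (gs (n + 2) F)‖ ^ 2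
        = p ^ F.card * (1 - p) ^ ((starEdges n).card - F.card) * (1/4)
          + (if F = starEdges n then
              p ^ F.card * (1 - p) ^ ((starEdges n).card - F.card) * (3/4) else 0) := by
    intro F hF
    rw [ip_cases n F (Finset.mem_powerset.mp hF)]
    split_ifs with h
    · simp; ring
    · norm_num
  rw [Finset.sum_congr rfl hterm, Finset.sum_add_distrib, ← Finset.sum_mul, sum_weights,
    Finset.sum_ite_eq' _ (starEdges n)
      (fun F => p ^ F.card * (1 - p) ^ ((starEdges n).card - F.card) * (3/4)),
    if_pos (Finset.mem_powerset_self _), Nat.sub_self, pow_zero, mul_one, starEdges_card]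
  ring
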